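/- For every n ≥ 1 and every choice of positive parameters a = (a_{ij}), there is a bijection φ from the set of nonempty faces of Ass_n^{III}(a) onto the set of all sets of pairwise non-crossing diagonals of the labeled (n+3)-gon such that for any two nonempty faces F and G: F ⊆ G if and only if φ(F) ⊇ φ(G). In particular, the vertices of Ass_n^{III}(a) are in bijection with the triangulations of the (n+3)-gon, and Ass_n^{III}(a) is an n-dimensional associahedron. -/

import Mathlib

open Finset

/-- Cyclic adjacency of vertex labels of the convex `m`-gon. -/
def adjacent (m : ℕ) (a b : Fin m) : Prop :=
  (a.val + 1) % m = b.val ∨ (b.val + 1) % m = a.val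

/-- A diagonal of the labeled `m`-gon: an unordered pair of distinct,
non cyclically adjacent labels. -/
def IsDiagonal (m : ℕ) (d : Finset (Fin m)) : Prop :=
  ∃ a b : Fin m, a ≠ b ∧ ¬ adjacent m a b ∧ d = {a, b}

/-- Two diagonals cross iff their endpoints alternate in cyclic order
(equivalently, exactly one endpoint of the second lies strictly between
the two endpoints of the first). -/
def Crosses (m : ℕ) (d e : Finset (Fin m)) : Prop :=
  ∃ p q r s : Fin m, p < q ∧ q < r ∧ r < s ∧
    ((d = {p, r} ∧ e = {q, s}) ∨ (d = {q, s} ∧ e = {p, r}))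

/-- A triangulation: a maximal set of pairwise non-crossing diagonals. -/
def IsTriangulation (m : ℕ) (t : Finset (Finset (Fin m))) : Prop :=
  (∀ d ∈ t, IsDiagonal m d) ∧
  (∀ d ∈ t, ∀ e ∈ t, ¬ Crosses m d e) ∧
  (∀ d, IsDiagonal m d → (∀ e ∈ t, ¬ Crosses m d e) → d ∈ t)

/-- The pair `{a, b}` is a polygon edge (cyclically adjacent labels) or a
diagonal belonging to `t`. -/
def edgeOrDiag (m : ℕ) (t : Finset (Finset (Fin m))) (a b : Fin m) : Prop :=
  adjacent m a b ∨ ({a, b} : Finset (Fin m)) ∈ t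

/-- Area of the triangle with vertices `p`, `q`, `r` in the plane. -/
noncomputable def triArea (p q r : ℝ × ℝ) : ℝ :=
  |(q.1 - p.1) * (r.2 - p.2) - (r.1 - p.1) * (q.2 - p.2)| / 2

open Classical in
/-- The GKZ vector of a triangulation `t`: its `i`-th coordinate is the sum of
the areas of the triangles of `t` containing the vertex `i`. -/
noncomputable def gkz (m : ℕ) (q : Fin m → ℝ × ℝ) (t : Finset (Finset (Fin m))) :
    Fin m → ℝ := fun i =>
  ∑ a : Fin m, ∑ b : Fin m, ∑ c : Fin m,
    if a < b ∧ b < c ∧ edgeOrDiag m t a b ∧ edgeOrDiag m t b c ∧ edgeOrDiag m t a c ∧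
        (i = a ∨ i = b ∨ i = c)
    then triArea (q a) (q b) (q c) else 0

/-- The points `q 0, …, q (m-1)` are in strictly convex position, labeled
counterclockwise: every triple of labels in increasing order is positively oriented. -/
def ConvexCCW (m : ℕ) (q : Fin m → ℝ × ℝ) : Prop :=
  ∀ i j k : Fin m, i < j → j < k →
    0 < ((q j).1 - (q i).1) * ((q k).2 - (q i).2) -
        ((q k).1 - (q i).1) * ((q j).2 - (q i).2)

/-- The secondary polytope of the convex polygon with vertices `q`. -/
noncomputable def secondary (m : ℕ) (q : Fin m → ℝ × ℝ) : Set (Fin m → ℝ) :=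
  convexHull ℝ {v | ∃ t, IsTriangulation m t ∧ v = gkz m q t}

def dot {k : ℕ} (w x : Fin k → ℝ) : ℝ := ∑ i, w i * x i

/-- The set of points of `P` maximizing the linear functional `⟨w, ·⟩`. -/
def maxFace {k : ℕ} (P : Set (Fin k → ℝ)) (w : Fin k → ℝ) : Set (Fin k → ℝ) :=
  {x ∈ P | ∀ y ∈ P, dot w y ≤ dot w x}

/-- A face of `P`: the set of points of `P` maximizing some linear functional. -/
def IsFaceOf {k : ℕ} (P F : Set (Fin k → ℝ)) : Prop :=
  ∃ w : Fin k → ℝ, F = maxFace P w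

/-- Linear span of the difference set of `F`. -/
def spanDiff {k : ℕ} (F : Set (Fin k → ℝ)) : Submodule ℝ (Fin k → ℝ) :=
  Submodule.span ℝ {z | ∃ u ∈ F, ∃ v ∈ F, z = u - v}

/-- Dimension of a set: the rank of the span of its difference set. -/
noncomputable def dimOf {k : ℕ} (F : Set (Fin k → ℝ)) : ℕ :=
  Module.finrank ℝ (spanDiff F)

/-- A facet: a face of dimension one less than the polytope. -/
def IsFacetOf {k : ℕ} (P F : Set (Fin k → ℝ)) : Prop :=
  IsFaceOf P F ∧ dimOf F + 1 = dimOf P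

/-- Two facets are parallel if the linear spans of their difference sets coincide. -/
def ParallelFaces {k : ℕ} (F F' : Set (Fin k → ℝ)) : Prop :=
  spanDiff F = spanDiff F'

/-- A vertex of `P`. -/
def vertexOf {k : ℕ} (P : Set (Fin k → ℝ)) (v : Fin k → ℝ) : Prop :=
  v ∈ P ∧ IsFaceOf P {v}

/-- The standard basis vector `e i` of `ℝ^k`. -/
noncomputable def eVec {k : ℕ} (i : Fin k) : Fin k → ℝ := Pi.single i 1

/-- The simple root `α i = e i − e (i+1)` of type `A n`. -/
noncomputable def simpleRoot (n : ℕ) (i : Fin n) : Fin (n+1) → ℝ :=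
  eVec i.castSucc - eVec i.succ

/-- Almost positive roots of type `A n`: positive roots together with the
negatives of the simple roots. -/
def AlmostPositive (n : ℕ) (β : Fin (n+1) → ℝ) : Prop :=
  (∃ i j : Fin (n+1), i < j ∧ β = eVec i - eVec j) ∨ (∃ i : Fin n, β = -simpleRoot n i)

/-- The `i`-th snake diagonal `δ_i = {⌈(i+1)/2⌉, n+2−⌊(i+1)/2⌋}` of the
`(n+3)`-gon (here `i : Fin n` is `0`-based). -/
def snake (n : ℕ) (i : Fin n) : Finset (Fin (n+3)) :=
  {⟨(i.val + 2) / 2, by have := i.isLt; omega⟩, ⟨n + 2 - (i.val + 1) / 2, by omega⟩}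

/-- The correspondence between almost positive roots and diagonals of the
`(n+3)`-gon: `−α i` corresponds to the snake diagonal `δ i`, and the positive
root `α i + ⋯ + α j = e i − e (j+1)` corresponds to the unique diagonal crossing
exactly the snake diagonals `δ i, …, δ j`. -/
def RootDiag (n : ℕ) (β : Fin (n+1) → ℝ) (d : Finset (Fin (n+3))) : Prop :=
  (∃ i : Fin n, β = -simpleRoot n i ∧ d = snake n i) ∨
  (∃ i j : Fin n, i ≤ j ∧ β = eVec i.castSucc - eVec j.succ ∧ IsDiagonal (n+3) d ∧
    ∀ k : Fin n, (Crosses (n+3) d (snake n k) ↔ i ≤ k ∧ k ≤ j))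

/-- Two almost positive roots are compatible if their corresponding diagonals
do not cross. -/
def Compatible (n : ℕ) (β γ : Fin (n+1) → ℝ) : Prop :=
  ∀ d e : Finset (Fin (n+3)), RootDiag n β d → RootDiag n γ e → ¬ Crosses (n+3) d e

/-- A cluster of type `A n`: a maximal set of pairwise compatible almost
positive roots. -/
def IsCluster (n : ℕ) (C : Finset (Fin (n+1) → ℝ)) : Prop :=
  (∀ β ∈ C, AlmostPositive n β) ∧
  (∀ β ∈ C, ∀ γ ∈ C, Compatible n β γ) ∧
  (∀ β, AlmostPositive n β → (∀ γ ∈ C, Compatible n β γ) → β ∈ C)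

/-- The cone of nonnegative linear combinations of the elements of `C`. -/
def coneOf (n : ℕ) (C : Finset (Fin (n+1) → ℝ)) : Set (Fin (n+1) → ℝ) :=
  {x | ∃ c : (Fin (n+1) → ℝ) → ℝ, (∀ β ∈ C, 0 ≤ c β) ∧ x = ∑ β ∈ C, c β • β}

/-- The normal cone of `P` at `v`, taken within the hyperplane
`H = {x : ∑ i, x i = 0}`. -/
def normalConeIn (n : ℕ) (P : Set (Fin (n+1) → ℝ)) (v : Fin (n+1) → ℝ) :
    Set (Fin (n+1) → ℝ) :=
  {w | (∑ i, w i = 0) ∧ ∀ x ∈ P, dot w x ≤ dot w v}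

/-- A cluster-fan polytope of type `A n`: a polytope contained in the
hyperplane `H`, of dimension `n`, whose vertex normal cones within `H` are
exactly the cones spanned by the clusters of type `A n`. -/
def IsClusterFanPolytope (n : ℕ) (P : Set (Fin (n+1) → ℝ)) : Prop :=
  (∃ V : Finset (Fin (n+1) → ℝ), P = convexHull ℝ (V : Set (Fin (n+1) → ℝ))) ∧
  (∀ x ∈ P, ∑ i, x i = 0) ∧
  dimOf P = n ∧
  {S : Set (Fin (n+1) → ℝ) | ∃ v, vertexOf P v ∧ S = normalConeIn n P v} =
    {S : Set (Fin (n+1) → ℝ) |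
      ∃ C : Finset (Fin (n+1) → ℝ), IsCluster n C ∧ S = coneOf n C}

/-- The simplex `Δ_{[i,…,j]} = conv{e i, …, e j} ⊂ ℝ^{n+1}`. -/
noncomputable def stdSimplexSeg (n : ℕ) (i j : Fin (n+1)) : Set (Fin (n+1) → ℝ) :=
  convexHull ℝ {x | ∃ k : Fin (n+1), i ≤ k ∧ k ≤ j ∧ x = eVec k}

/-- Index set of the pairs `1 ≤ i ≤ j ≤ n+1`. -/
def pairIdx (n : ℕ) : Finset (Fin (n+1) × Fin (n+1)) :=
  Finset.univ.filter (fun p => p.1 ≤ p.2)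

/-- The associahedron `Ass_n^{III}(a)`: the Minkowski sum
`∑_{i ≤ j} a_{ij} Δ_{[i,…,j]}`. -/
noncomputable def AssIII (n : ℕ) (a : Fin (n+1) × Fin (n+1) → ℝ) :
    Set (Fin (n+1) → ℝ) :=
  {x | ∃ f : Fin (n+1) × Fin (n+1) → Fin (n+1) → ℝ,
    (∀ p ∈ pairIdx n, f p ∈ stdSimplexSeg n p.1 p.2) ∧
    x = ∑ p ∈ pairIdx n, a p • f p}

/-- The functional with first `i` coordinates `1`, the rest `0`. -/
def wFun (n : ℕ) (i : ℕ) : Fin (n+1) → ℝ := fun k => if (k : ℕ) < i then 1 else 0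
namespace AssocAux

/-- Interval `[M.1, M.2]` is a proper nonempty subinterval of `[0,n]`. -/
def ProperI (n : ℕ) (M : ℕ × ℕ) : Prop :=
  M.1 ≤ M.2 ∧ M.2 ≤ n ∧ ¬(M.1 = 0 ∧ M.2 = n)

/-- `k` is an argmax of `v` on `[x,y]`. -/
def Amax (v : ℕ → ℝ) (x y k : ℕ) : Prop :=
  x ≤ k ∧ k ≤ y ∧ ∀ l, x ≤ l → l ≤ y → v l ≤ v k

/-- The interval `M` is a "basin" of `v`: values strictly below both boundary values. -/
def DmemN (n : ℕ) (v : ℕ → ℝ) (M : ℕ × ℕ) : Prop :=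
  ProperI n M ∧ (0 < M.1 → ∀ k, M.1 ≤ k → k ≤ M.2 → v k < v (M.1 - 1)) ∧
    (M.2 < n → ∀ k, M.1 ≤ k → k ≤ M.2 → v k < v (M.2 + 1))

def NoncrossI (M M' : ℕ × ℕ) : Prop :=
  (M'.1 ≤ M.1 ∧ M.2 ≤ M'.2) ∨ (M.1 ≤ M'.1 ∧ M'.2 ≤ M.2) ∨
    M.2 + 1 < M'.1 ∨ M'.2 + 1 < M.1

lemma amax_exists (v : ℕ → ℝ) {x y : ℕ} (h : x ≤ y) : ∃ k, Amax v x y k := by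
  obtain ⟨k, hk, hmax⟩ := Finset.exists_max_image (Finset.Icc x y) v
    ⟨x, by simp [h]⟩
  rw [Finset.mem_Icc] at hk
  exact ⟨k, hk.1, hk.2, fun l h1 h2 => hmax l (Finset.mem_Icc.mpr ⟨h1, h2⟩)⟩

/-- C1: two basins are non-crossing. -/
lemma dmem_noncross {n : ℕ} {v : ℕ → ℝ} {M M' : ℕ × ℕ}
    (hM : DmemN n v M) (hM' : DmemN n v M') : NoncrossI M M' := by
  obtain ⟨⟨h12, h2n, -⟩, hL, hR⟩ := hM
  obtain ⟨⟨h12', h2n', -⟩, hL', hR'⟩ := hM'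
  by_contra hnc
  unfold NoncrossI at hnc
  push_neg at hnc
  -- crossing: two symmetric cases
  rcases lt_or_ge M.1 M'.1 with hlt | hle
  · -- M.1 < M'.1 ≤ M.2+1 and M.2 < M'.2
    have hb1 : M'.1 ≤ M.2 + 1 := by omega
    have hb2 : M.2 < M'.2 := by omega
    have k1 : v (M'.1 - 1) < v (M.2 + 1) := hR (by omega) (M'.1 - 1) (by omega) (by omega)
    have k2 : v (M.2 + 1) < v (M'.1 - 1) := hL' (by omega) (M.2 + 1) (by omega) (by omega)
    linarith
  · have hlt' : M'.1 < M.1 := by omega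
    have hb1 : M.1 ≤ M'.2 + 1 := by omega
    have hb2 : M'.2 < M.2 := by omega
    have k1 : v (M.1 - 1) < v (M'.2 + 1) := hR' (by omega) (M.1 - 1) (by omega) (by omega)
    have k2 : v (M'.2 + 1) < v (M.1 - 1) := hL (by omega) (M'.2 + 1) (by omega) (by omega)
    linarith

/-- C2: argmax characterization via basins. -/
lemma amax_iff_dmem {n : ℕ} (v : ℕ → ℝ) {x y k : ℕ} (hy : y ≤ n)
    (hk1 : x ≤ k) (hk2 : k ≤ y) :
    Amax v x y k ↔ ∀ M, DmemN n v M → M.1 ≤ k → k ≤ M.2 → M.1 ≤ x ∧ y ≤ M.2 := by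
  constructor
  · rintro ⟨-, -, hmax⟩ M hM hk1' hk2'
    obtain ⟨⟨h12, h2n, -⟩, hL, hR⟩ := hM
    by_contra hcon
    push_neg at hcon
    rcases lt_or_ge x M.1 with hx | hx
    · -- left boundary point M.1-1 is in [x,y]
      have h1 : v k < v (M.1 - 1) := hL (by omega) k hk1' hk2'
      have h2 : v (M.1 - 1) ≤ v k := hmax (M.1 - 1) (by omega) (by omega)
      linarith
    · have hyy : M.2 < y := hcon hx
      have h1 : v k < v (M.2 + 1) := hR (by omega) k hk1' hk2'
      have h2 : v (M.2 + 1) ≤ v k := hmax (M.2 + 1) (by omega) (by omega)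
      linarith
  · intro h
    refine ⟨hk1, hk2, ?_⟩
    by_contra hcon
    push_neg at hcon
    obtain ⟨l, hl1, hl2, hlv⟩ := hcon
    -- build the basin around k
    classical
    set T : Finset ℕ := (Finset.Icc 0 k).filter
      (fun i => ∀ m, i ≤ m → m ≤ k → v m ≤ v k) with hT
    have hkT : k ∈ T := by
      simp only [hT, Finset.mem_filter, Finset.mem_Icc]
      exact ⟨⟨Nat.zero_le _, le_rfl⟩, fun m h1 h2 => by
        have : m = k := le_antisymm h2 h1; rw [this]⟩
    set T' : Finset ℕ := (Finset.Icc k n).filter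
      (fun j => ∀ m, k ≤ m → m ≤ j → v m ≤ v k) with hT'
    have hkT' : k ∈ T' := by
      simp only [hT', Finset.mem_filter, Finset.mem_Icc]
      exact ⟨⟨le_rfl, by omega⟩, fun m h1 h2 => by
        have : m = k := le_antisymm h2 h1; rw [this]⟩
    set i0 := T.min' ⟨k, hkT⟩ with hi0
    set j0 := T'.max' ⟨k, hkT'⟩ with hj0
    have hi0T : i0 ∈ T := T.min'_mem _
    have hj0T : j0 ∈ T' := T'.max'_mem _
    have hi0k : i0 ≤ k ∧ ∀ m, i0 ≤ m → m ≤ k → v m ≤ v k := by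
      have := hi0T
      simp only [hT, Finset.mem_filter, Finset.mem_Icc] at this
      exact ⟨this.1.2, this.2⟩
    have hj0k : k ≤ j0 ∧ j0 ≤ n ∧ ∀ m, k ≤ m → m ≤ j0 → v m ≤ v k := by
      have := hj0T
      simp only [hT', Finset.mem_filter, Finset.mem_Icc] at this
      exact ⟨this.1.1, this.1.2, this.2⟩
    -- the basin M := (i0, j0)
    have hvals : ∀ m, i0 ≤ m → m ≤ j0 → v m ≤ v k := by
      intro m h1 h2
      rcases le_or_gt m k with hm | hm
      · exact hi0k.2 m h1 hm
      · exact hj0k.2.2 m hm.le h2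
    -- l is outside the basin
    have hlout : ¬(i0 ≤ l ∧ l ≤ j0) := by
      rintro ⟨a, b⟩; exact absurd (hvals l a b) (not_le.mpr hlv)
    have hproper : ¬(i0 = 0 ∧ j0 = n) := by
      rintro ⟨a, b⟩; exact hlout ⟨by omega, by omega⟩
    have hleft : 0 < i0 → v k < v (i0 - 1) := by
      intro hpos
      by_contra hcon2
      push_neg at hcon2
      have : i0 - 1 ∈ T := by
        simp only [hT, Finset.mem_filter, Finset.mem_Icc]
        refine ⟨⟨Nat.zero_le _, by omega⟩, fun m h1 h2 => ?_⟩
        rcases Nat.eq_or_lt_of_le h1 with he | hlt2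
        · rw [← he]; exact hcon2
        · exact hi0k.2 m (by omega) h2
      have := T.min'_le _ this
      omega
    have hright : j0 < n → v k < v (j0 + 1) := by
      intro hpos
      by_contra hcon2
      push_neg at hcon2
      have : j0 + 1 ∈ T' := by
        simp only [hT', Finset.mem_filter, Finset.mem_Icc]
        refine ⟨⟨by omega, by omega⟩, fun m h1 h2 => ?_⟩
        rcases Nat.eq_or_lt_of_le h2 with he | hlt2
        · rw [he]; exact hcon2
        · exact hj0k.2.2 m h1 (by omega)
      have := T'.le_max' _ this
      omega
    have hD : DmemN n v (i0, j0) := by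
      refine ⟨⟨by omega, hj0k.2.1, hproper⟩, ?_, ?_⟩
      · intro hpos m h1 h2
        exact lt_of_le_of_lt (hvals m h1 h2) (hleft hpos)
      · intro hpos m h1 h2
        exact lt_of_le_of_lt (hvals m h1 h2) (hright hpos)
    have := h (i0, j0) hD (by exact hi0k.1) (by exact hj0k.1)
    exact hlout ⟨by omega, by omega⟩

section Depth
variable {n : ℕ} (F : Finset (ℕ × ℕ))

/-- depth of `k` in family `F`. -/
def dep (k : ℕ) : ℕ := (F.filter (fun M => M.1 ≤ k ∧ k ≤ M.2)).card

/-- canonical function of a family. -/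
noncomputable def vF (k : ℕ) : ℝ := -(dep F k : ℝ)

lemma vF_lt {a b : ℕ} : vF F a < vF F b ↔ dep F b < dep F a := by
  simp only [vF, neg_lt_neg_iff, Nat.cast_lt]

lemma dep_le {a b : ℕ} (h : ∀ M ∈ F, M.1 ≤ a ∧ a ≤ M.2 → M.1 ≤ b ∧ b ≤ M.2) :
    dep F a ≤ dep F b := by
  apply Finset.card_le_card
  intro M hM
  rw [Finset.mem_filter] at hM ⊢
  exact ⟨hM.1, h M hM.1 hM.2⟩

lemma dep_lt {a b : ℕ} (h : ∀ M ∈ F, M.1 ≤ a ∧ a ≤ M.2 → M.1 ≤ b ∧ b ≤ M.2)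
    (W : ℕ × ℕ) (hW : W ∈ F) (hWb : W.1 ≤ b ∧ b ≤ W.2) (hWa : ¬(W.1 ≤ a ∧ a ≤ W.2)) :
    dep F a < dep F b := by
  apply Finset.card_lt_card
  constructor
  · intro M hM
    rw [Finset.mem_filter] at hM ⊢
    exact ⟨hM.1, h M hM.1 hM.2⟩
  · intro hsub
    have := hsub (Finset.mem_filter.mpr ⟨hW, hWb⟩)
    rw [Finset.mem_filter] at this
    exact hWa this.2

variable (hF : ∀ M ∈ F, ProperI n M)
  (hNC : ∀ M ∈ F, ∀ M' ∈ F, NoncrossI M M')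

include hF hNC in
/-- C3 easy direction: every family member is a basin of `vF`. -/
lemma mem_dmem_vF {M : ℕ × ℕ} (hM : M ∈ F) : DmemN n (vF F) M := by
  obtain ⟨h12, h2n, hnp⟩ := hF M hM
  refine ⟨⟨h12, h2n, hnp⟩, ?_, ?_⟩
  · intro hpos k hk1 hk2
    rw [vF_lt]
    refine dep_lt F (fun M' hM' hmem => ?_) M hM ⟨hk1, hk2⟩ (by omega)
    -- every member containing M.1 - 1 contains M, hence k
    have hnc := hNC M' hM' M hM
    rcases hnc with h | h | h | h
    · omega
    · exact ⟨by omega, by omega⟩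
    · omega
    · omega
  · intro hpos k hk1 hk2
    rw [vF_lt]
    refine dep_lt F (fun M' hM' hmem => ?_) M hM ⟨hk1, hk2⟩ (by omega)
    have hnc := hNC M' hM' M hM
    rcases hnc with h | h | h | h
    · omega
    · exact ⟨by omega, by omega⟩
    · omega
    · omega

include hF hNC in
/-- C3 hard direction: every basin of `vF` is a family member. -/
lemma dmem_vF_mem {J : ℕ × ℕ} (hJ : DmemN n (vF F) J) : J ∈ F := by
  classical
  obtain ⟨⟨hxy, hyn, hprop⟩, hL, hR⟩ := hJ
  by_contra hJF
  -- (a) every member meeting J is nested with J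
  have nested : ∀ M ∈ F, M.1 ≤ J.2 → J.1 ≤ M.2 →
      (J.1 ≤ M.1 ∧ M.2 ≤ J.2) ∨ (M.1 ≤ J.1 ∧ J.2 ≤ M.2) := by
    intro M hM hm1 hm2
    by_contra hcon
    have hA : ¬(J.1 ≤ M.1 ∧ M.2 ≤ J.2) := fun h => hcon (Or.inl h)
    have hB : ¬(M.1 ≤ J.1 ∧ J.2 ≤ M.2) := fun h => hcon (Or.inr h)
    obtain ⟨hm12, hm2n, -⟩ := hF M hM
    rcases le_or_gt J.1 M.1 with hc1 | hc1
    · -- case B: J.1 ≤ M.1, so J.2 < M.2, and J.1 < M.1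
      have hyM : J.2 < M.2 := by
        rcases Nat.lt_or_ge J.2 M.2 with h | h
        · exact h
        · exact absurd ⟨hc1, by omega⟩ hA
      have hxM : J.1 < M.1 := by
        rcases Nat.lt_or_ge J.1 M.1 with h | h
        · exact h
        · exact absurd ⟨by omega, by omega⟩ hB
      -- every member containing M.1-1 contains J.2+1
      have key : dep F (M.1 - 1) ≤ dep F (J.2 + 1) := by
        apply dep_le
        intro M' hM' hmem
        have hnc := hNC M' hM' M hM
        rcases hnc with h | h | h | h
        · exact ⟨by omega, by omega⟩
        · omega
        · omega
        · omega
      have hlt2 : vF F (M.1 - 1) < vF F (J.2 + 1) :=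
        hR (by omega) (M.1 - 1) (by omega) (by omega)
      rw [vF_lt] at hlt2
      omega
    · -- case A: M.1 < J.1; then M.2 < J.2
      have hyM : M.2 < J.2 := by
        rcases Nat.lt_or_ge M.2 J.2 with h | h
        · exact h
        · exact absurd ⟨by omega, h⟩ hB
      have key : dep F (M.2 + 1) ≤ dep F (J.1 - 1) := by
        apply dep_le
        intro M' hM' hmem
        have hnc := hNC M' hM' M hM
        rcases hnc with h | h | h | h
        · exact ⟨by omega, by omega⟩
        · omega
        · omega
        · omega
      have hlt2 : vF F (M.2 + 1) < vF F (J.1 - 1) :=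
        hL (by omega) (M.2 + 1) (by omega) (by omega)
      rw [vF_lt] at hlt2
      omega
  -- (b) find k0 ∈ [J.1,J.2] in no member contained in J
  have hb : ∃ k0, J.1 ≤ k0 ∧ k0 ≤ J.2 ∧ ∀ M ∈ F, J.1 ≤ M.1 → M.2 ≤ J.2 →
      ¬(M.1 ≤ k0 ∧ k0 ≤ M.2) := by
    set T1 : Finset (ℕ × ℕ) := F.filter (fun M => M.1 = J.1 ∧ M.2 ≤ J.2) with hT1
    rcases Finset.eq_empty_or_nonempty T1 with hT1e | hT1n
    · refine ⟨J.1, le_rfl, hxy, fun M hM hm1 hm2 hcon => ?_⟩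
      have : M ∈ T1 := by
        rw [hT1, Finset.mem_filter]
        exact ⟨hM, by omega, hm2⟩
      rw [hT1e] at this
      exact absurd this (Finset.notMem_empty M)
    · obtain ⟨M1, hM1T, hM1max⟩ := Finset.exists_max_image T1 (fun M => M.2) hT1n
      rw [hT1, Finset.mem_filter] at hM1T
      obtain ⟨hM1F, hM1x, hM1y⟩ := hM1T
      obtain ⟨hM1a, hM1b, -⟩ := hF M1 hM1F
      have hr : M1.2 < J.2 := by
        rcases Nat.eq_or_lt_of_le hM1y with he | h
        · exfalso
          apply hJF
          have hMJ : M1 = J := Prod.ext_iff.mpr ⟨hM1x, he⟩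
          rwa [← hMJ]
        · exact h
      refine ⟨M1.2 + 1, by omega, by omega, fun M hM hm1 hm2 hcon => ?_⟩
      have hnc := hNC M hM M1 hM1F
      rcases hnc with h | h | h | h
      · -- M ⊆ M1 : impossible, M1.2+1 ≤ M.2 ≤ M1.2
        omega
      · -- M1 ⊆ M : then M ∈ T1 so M.2 ≤ M1.2, contradiction
        have : M ∈ T1 := by
          rw [hT1, Finset.mem_filter]
          exact ⟨hM, by omega, hm2⟩
        have h2le : M.2 ≤ M1.2 := hM1max M this
        omega
      · omega
      · omega
  obtain ⟨k0, hk0x, hk0y, hk0⟩ := hb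
  -- (c) members containing k0 are exactly the supersets of J
  set Sup : Finset (ℕ × ℕ) := F.filter (fun M => M.1 ≤ J.1 ∧ J.2 ≤ M.2) with hSup
  have hdep : dep F k0 = Sup.card := by
    unfold dep
    congr 1
    apply Finset.filter_congr
    intro M hM
    constructor
    · rintro ⟨h1, h2⟩
      rcases nested M hM (by omega) (by omega) with h | h
      · exact absurd ⟨h1, h2⟩ (hk0 M hM h.1 h.2)
      · exact h
    · rintro ⟨h1, h2⟩
      exact ⟨by omega, by omega⟩
  have hstick : ∀ M ∈ Sup, M.1 < J.1 ∨ J.2 < M.2 := by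
    intro M hM
    rw [hSup, Finset.mem_filter] at hM
    by_contra hcon
    push_neg at hcon
    exact hJF ((show M = J from Prod.ext_iff.mpr ⟨by omega, by omega⟩) ▸ hM.1)
  by_cases hall : ∀ M ∈ Sup, M.1 < J.1
  · rcases Nat.eq_zero_or_pos J.1 with hx0 | hxpos
    · have hSe : Sup = ∅ := by
        rw [Finset.eq_empty_iff_forall_notMem]
        intro M hM
        have := hall M hM
        omega
      have hyn' : J.2 < n := by
        rcases Nat.lt_or_ge J.2 n with h | h
        · exact h
        · exact absurd ⟨hx0, by omega⟩ hprop
      have := hR hyn' k0 hk0x hk0y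
      rw [vF_lt, hdep, hSe, Finset.card_empty] at this
      omega
    · have hle : dep F k0 ≤ dep F (J.1 - 1) := by
        rw [hdep]
        apply Finset.card_le_card
        intro M hM
        have h1 := hall M hM
        rw [hSup, Finset.mem_filter] at hM
        rw [Finset.mem_filter]
        exact ⟨hM.1, by omega, by omega⟩
      have := hL hxpos k0 hk0x hk0y
      rw [vF_lt] at this
      omega
  · push_neg at hall
    obtain ⟨M0, hM0S, hM0x⟩ := hall
    have hM0S' := hM0S
    rw [hSup, Finset.mem_filter] at hM0S'
    have hM0y : J.2 < M0.2 := by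
      rcases hstick M0 hM0S with h | h
      · omega
      · exact h
    have hyn' : J.2 < n := by
      have := (hF M0 hM0S'.1).2.1
      omega
    have hle : dep F k0 ≤ dep F (J.2 + 1) := by
      rw [hdep]
      apply Finset.card_le_card
      intro M hM
      have hMS := hM
      rw [hSup, Finset.mem_filter] at hM
      rw [Finset.mem_filter]
      refine ⟨hM.1, by omega, ?_⟩
      rcases hstick M hMS with h | h
      · have hnc := hNC M0 hM0S'.1 M hM.1
        rcases hnc with hcase | hcase | hcase | hcase
        · omega
        · omega
        · omega
        · omega
      · omega
    have := hR hyn' k0 hk0x hk0y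
    rw [vF_lt] at this
    omega

end Depth



section Geom
variable {n : ℕ}

lemma eVec_inj {a b : Fin (n+1)} (h : eVec a = eVec b) : a = b := by
  by_contra hne
  have h1 := congrFun h a
  rw [eVec, eVec, Pi.single_eq_same, Pi.single_eq_of_ne hne] at h1
  exact one_ne_zero h1

lemma dot_eVec (w : Fin (n+1) → ℝ) (k : Fin (n+1)) : dot w (eVec k) = w k := by
  unfold dot eVec
  rw [Finset.sum_eq_single k]
  · rw [Pi.single_eq_same, mul_one]
  · intro b _ hb
    rw [Pi.single_eq_of_ne hb, mul_zero]
  · intro hk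
    exact absurd (Finset.mem_univ k) hk

lemma dot_add (w x y : Fin (n+1) → ℝ) : dot w (x + y) = dot w x + dot w y := by
  unfold dot
  rw [← Finset.sum_add_distrib]
  exact Finset.sum_congr rfl fun i _ => by simp [mul_add]

lemma dot_smul (w : Fin (n+1) → ℝ) (c : ℝ) (x : Fin (n+1) → ℝ) :
    dot w (c • x) = c * dot w x := by
  unfold dot
  rw [Finset.mul_sum]
  exact Finset.sum_congr rfl fun i _ => by
    simp [Pi.smul_apply, smul_eq_mul]; ring

lemma dot_finsum {ι : Type*} (s : Finset ι) (w : Fin (n+1) → ℝ)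
    (g : ι → Fin (n+1) → ℝ) : dot w (∑ p ∈ s, g p) = ∑ p ∈ s, dot w (g p) := by
  classical
  induction s using Finset.induction with
  | empty => simp [dot]
  | insert _ _ hx ih =>
    rw [Finset.sum_insert hx, Finset.sum_insert hx, dot_add, ih]

/-- `k` is an argmax of `w` on the interval `[p.1, p.2]`. -/
def AG (w : Fin (n+1) → ℝ) (p : Fin (n+1) × Fin (n+1)) (k : Fin (n+1)) : Prop :=
  p.1 ≤ k ∧ k ≤ p.2 ∧ ∀ l, p.1 ≤ l → l ≤ p.2 → w l ≤ w k

lemma exists_ag (w : Fin (n+1) → ℝ) {p : Fin (n+1) × Fin (n+1)} (h : p.1 ≤ p.2) :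
    ∃ k, AG w p k := by
  obtain ⟨b, hb, hmax⟩ := Finset.exists_max_image (Finset.Icc p.1 p.2) w
    ⟨p.1, Finset.mem_Icc.mpr ⟨le_rfl, h⟩⟩
  rw [Finset.mem_Icc] at hb
  exact ⟨b, hb.1, hb.2, fun l h1 h2 => hmax l (Finset.mem_Icc.mpr ⟨h1, h2⟩)⟩

/-- a chosen argmax of `w` on `[p.1, p.2]`. -/
noncomputable def gsel (w : Fin (n+1) → ℝ) (p : Fin (n+1) × Fin (n+1)) : Fin (n+1) :=
  if h : p.1 ≤ p.2 then (exists_ag w h).choose else p.1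

lemma gsel_spec (w : Fin (n+1) → ℝ) {p : Fin (n+1) × Fin (n+1)} (h : p.1 ≤ p.2) :
    AG w p (gsel w p) := by
  rw [gsel, dif_pos h]
  exact (exists_ag w h).choose_spec

lemma eVec_mem_simplex {i j k : Fin (n+1)} (h1 : i ≤ k) (h2 : k ≤ j) :
    eVec k ∈ stdSimplexSeg n i j :=
  subset_convexHull ℝ _ ⟨k, h1, h2, rfl⟩

lemma dot_le_on_simplex {w : Fin (n+1) → ℝ} {p : Fin (n+1) × Fin (n+1)} {b : Fin (n+1)}
    (hb : AG w p b) {f : Fin (n+1) → ℝ} (hf : f ∈ stdSimplexSeg n p.1 p.2) :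
    dot w f ≤ w b := by
  have hsub : stdSimplexSeg n p.1 p.2 ⊆ {x | dot w x ≤ w b} := by
    apply convexHull_min
    · rintro x ⟨k, hk1, hk2, rfl⟩
      simp only [Set.mem_setOf_eq, dot_eVec]
      exact hb.2.2 k hk1 hk2
    · intro x hx y hy α β hα hβ hαβ
      simp only [Set.mem_setOf_eq] at hx hy ⊢
      have : dot w (α • x + β • y) = α * dot w x + β * dot w y := by
        rw [dot_add, dot_smul, dot_smul]
      rw [this]
      calc α * dot w x + β * dot w y ≤ α * w b + β * w b := by
            apply add_le_add (mul_le_mul_of_nonneg_left hx hα)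
              (mul_le_mul_of_nonneg_left hy hβ)
        _ = w b := by rw [← add_mul, hαβ, one_mul]
  exact hsub hf

lemma stdSimplexSeg_eq (i j : Fin (n+1)) :
    stdSimplexSeg n i j =
      convexHull ℝ (((Finset.Icc i j).image eVec : Finset (Fin (n+1) → ℝ)) :
        Set (Fin (n+1) → ℝ)) := by
  unfold stdSimplexSeg
  congr 1
  ext x
  simp only [Finset.coe_image, Set.mem_image, Finset.mem_coe, Finset.mem_Icc,
    Set.mem_setOf_eq]
  constructor
  · rintro ⟨k, h1, h2, rfl⟩
    exact ⟨k, ⟨h1, h2⟩, rfl⟩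
  · rintro ⟨k, ⟨h1, h2⟩, rfl⟩
    exact ⟨k, h1, h2, rfl⟩

/-- representation of a point of the simplex by convex weights. -/
lemma simplex_rep {i j : Fin (n+1)} {f : Fin (n+1) → ℝ} (hf : f ∈ stdSimplexSeg n i j) :
    ∃ lam : Fin (n+1) → ℝ, (∀ k ∈ Finset.Icc i j, 0 ≤ lam k) ∧
      (∑ k ∈ Finset.Icc i j, lam k) = 1 ∧
      ∀ w : Fin (n+1) → ℝ, dot w f = ∑ k ∈ Finset.Icc i j, lam k * w k := by
  rw [stdSimplexSeg_eq, Finset.convexHull_eq] at hf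
  obtain ⟨wt, h0, h1, hc⟩ := hf
  have hinj : ∀ x ∈ Finset.Icc i j, ∀ y ∈ Finset.Icc i j,
      eVec x = eVec y → x = y := fun x _ y _ h => eVec_inj h
  rw [Finset.centerMass_eq_of_sum_1 _ _ h1] at hc
  refine ⟨fun k => wt (eVec k), ?_, ?_, ?_⟩
  · intro k hk
    exact h0 _ (Finset.mem_image_of_mem _ hk)
  · rw [← Finset.sum_image hinj]
    exact h1
  · intro w
    rw [← hc, Finset.sum_image hinj, dot_finsum]
    exact Finset.sum_congr rfl fun k _ => by
      simp only [id_eq, dot_smul, dot_eVec]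

section WithA
variable (a : Fin (n+1) × Fin (n+1) → ℝ)

/-- the maximal value of `dot w` over `AssIII n a`. -/
noncomputable def bval (w : Fin (n+1) → ℝ) : ℝ :=
  ∑ p ∈ pairIdx n, a p * w (gsel w p)

lemma mem_pairIdx {p : Fin (n+1) × Fin (n+1)} : p ∈ pairIdx n ↔ p.1 ≤ p.2 := by
  simp [pairIdx]

variable (ha : ∀ p : Fin (n+1) × Fin (n+1), p.1 ≤ p.2 → 0 < a p)

include ha in
lemma dot_le_bval {w : Fin (n+1) → ℝ} {x : Fin (n+1) → ℝ} (hx : x ∈ AssIII n a) :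
    dot w x ≤ bval a w := by
  obtain ⟨f, hf, rfl⟩ := hx
  rw [dot_finsum]
  apply Finset.sum_le_sum
  intro p hp
  have hple : p.1 ≤ p.2 := mem_pairIdx.mp hp
  rw [dot_smul]
  exact mul_le_mul_of_nonneg_left
    (dot_le_on_simplex (gsel_spec w hple) (hf p hp)) (ha p hple).le

/-- the vertex point associated to a selection `g`. -/
noncomputable def vpt (g : Fin (n+1) × Fin (n+1) → Fin (n+1)) : Fin (n+1) → ℝ :=
  ∑ p ∈ pairIdx n, a p • eVec (g p)

lemma vpt_mem {g : Fin (n+1) × Fin (n+1) → Fin (n+1)}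
    (hg : ∀ p ∈ pairIdx n, p.1 ≤ g p ∧ g p ≤ p.2) : vpt a g ∈ AssIII n a :=
  ⟨fun p => eVec (g p), fun p hp => eVec_mem_simplex (hg p hp).1 (hg p hp).2, rfl⟩

lemma dot_vpt (w : Fin (n+1) → ℝ) (g : Fin (n+1) × Fin (n+1) → Fin (n+1)) :
    dot w (vpt a g) = ∑ p ∈ pairIdx n, a p * w (g p) := by
  rw [vpt, dot_finsum]
  exact Finset.sum_congr rfl fun p _ => by rw [dot_smul, dot_eVec]

include ha in
lemma dot_vpt_eq_bval {w : Fin (n+1) → ℝ} {g : Fin (n+1) × Fin (n+1) → Fin (n+1)}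
    (hg : ∀ p ∈ pairIdx n, AG w p (g p)) : dot w (vpt a g) = bval a w := by
  rw [dot_vpt, bval]
  apply Finset.sum_congr rfl
  intro p hp
  have hple : p.1 ≤ p.2 := mem_pairIdx.mp hp
  have h1 := (hg p hp).2.2 _ (gsel_spec w hple).1 (gsel_spec w hple).2.1
  have h2 := (gsel_spec w hple).2.2 _ (hg p hp).1 (hg p hp).2.1
  rw [le_antisymm h1 h2]

include ha in
lemma mem_maxFace_iff {w : Fin (n+1) → ℝ} {x : Fin (n+1) → ℝ} :
    x ∈ maxFace (AssIII n a) w ↔ x ∈ AssIII n a ∧ dot w x = bval a w := by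
  constructor
  · rintro ⟨hx, hmax⟩
    refine ⟨hx, le_antisymm (dot_le_bval a ha hx) ?_⟩
    have hg : ∀ p ∈ pairIdx n, AG w p (gsel w p) :=
      fun p hp => gsel_spec w (mem_pairIdx.mp hp)
    have hmem : vpt a (gsel w) ∈ AssIII n a :=
      vpt_mem a fun p hp => ⟨(hg p hp).1, (hg p hp).2.1⟩
    have := hmax _ hmem
    rwa [dot_vpt_eq_bval a ha hg] at this
  · rintro ⟨hx, heq⟩
    exact ⟨hx, fun y hy => heq ▸ dot_le_bval a ha hy⟩

/-- termwise equality from sum equality. -/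
lemma term_eq {ι : Type*} {s : Finset ι} {c t m : ι → ℝ} (hc : ∀ p ∈ s, 0 < c p)
    (hle : ∀ p ∈ s, t p ≤ m p) (hsum : ∑ p ∈ s, c p * m p ≤ ∑ p ∈ s, c p * t p) :
    ∀ p ∈ s, t p = m p := by
  have h0 : ∑ p ∈ s, c p * (m p - t p) = 0 := by
    have h1 : ∑ p ∈ s, c p * (m p - t p) ≤ 0 := by
      have : ∑ p ∈ s, c p * (m p - t p) = ∑ p ∈ s, c p * m p - ∑ p ∈ s, c p * t p := by
        rw [← Finset.sum_sub_distrib]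
        exact Finset.sum_congr rfl fun p _ => by ring
      rw [this]
      linarith
    have h2 : 0 ≤ ∑ p ∈ s, c p * (m p - t p) :=
      Finset.sum_nonneg fun p hp =>
        mul_nonneg (hc p hp).le (by linarith [hle p hp])
    linarith
  intro p hp
  have := (Finset.sum_eq_zero_iff_of_nonneg fun q hq =>
    mul_nonneg (hc q hq).le (by linarith [hle q hq])).mp h0 p hp
  have hcp := hc p hp
  rcases mul_eq_zero.mp this with h | h
  · linarith
  · linarith

include ha in
/-- KEY: containment of faces is equivalent to pointwise containment of argmax sets. -/
theorem key (w u : Fin (n+1) → ℝ) :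
    maxFace (AssIII n a) w ⊆ maxFace (AssIII n a) u ↔
      ∀ p ∈ pairIdx n, ∀ k, AG w p k → AG u p k := by
  constructor
  · intro hsub p0 hp0 k hk
    classical
    set g : Fin (n+1) × Fin (n+1) → Fin (n+1) :=
      fun p => if p = p0 then k else gsel w p with hgdef
    have hg : ∀ p ∈ pairIdx n, AG w p (g p) := by
      intro p hp
      by_cases h : p = p0
      · subst h
        simp only [hgdef, if_true]
        exact hk
      · simp only [hgdef]
        rw [if_neg h]
        exact gsel_spec w (mem_pairIdx.mp hp)
    have hx : vpt a g ∈ maxFace (AssIII n a) w :=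
      (mem_maxFace_iff a ha).mpr ⟨vpt_mem a fun p hp => ⟨(hg p hp).1, (hg p hp).2.1⟩,
        dot_vpt_eq_bval a ha hg⟩
    have hxu := (mem_maxFace_iff a ha).mp (hsub hx)
    have heq : dot u (vpt a g) = bval a u := hxu.2
    rw [dot_vpt, bval] at heq
    have hterm : ∀ p ∈ pairIdx n, u (g p) = u (gsel u p) := by
      apply term_eq (fun p hp => ha p (mem_pairIdx.mp hp))
      · intro p hp
        exact (gsel_spec u (mem_pairIdx.mp hp)).2.2 _ (hg p hp).1 (hg p hp).2.1
      · rw [heq]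
    have hk0 : u k = u (gsel u p0) := by
      have := hterm p0 hp0
      simpa only [hgdef, if_true] using this
    refine ⟨hk.1, hk.2.1, fun l h1 h2 => ?_⟩
    rw [hk0]
    exact (gsel_spec u (mem_pairIdx.mp hp0)).2.2 l h1 h2
  · intro hag x hx
    rw [mem_maxFace_iff a ha] at hx ⊢
    obtain ⟨hxP, hxval⟩ := hx
    refine ⟨hxP, ?_⟩
    obtain ⟨f, hf, rfl⟩ := hxP
    -- each summand is w-maximal
    have hterm : ∀ p ∈ pairIdx n, dot w (f p) = w (gsel w p) := by
      apply term_eq (fun p hp => ha p (mem_pairIdx.mp hp))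
      · intro p hp
        exact dot_le_on_simplex (gsel_spec w (mem_pairIdx.mp hp)) (hf p hp)
      · rw [dot_finsum] at hxval
        rw [← bval]
        rw [show ∑ p ∈ pairIdx n, a p * dot w (f p) =
          ∑ p ∈ pairIdx n, dot w (a p • f p) from
          Finset.sum_congr rfl fun p _ => (dot_smul w (a p) (f p)).symm]
        exact le_of_eq hxval.symm
    -- transfer to u
    rw [dot_finsum, bval]
    apply Finset.sum_congr rfl
    intro p hp
    have hple : p.1 ≤ p.2 := mem_pairIdx.mp hp
    rw [dot_smul]
    congr 1
    obtain ⟨lam, hlam0, hlam1, hlamdot⟩ := simplex_rep (hf p hp)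
    have hgw := gsel_spec w hple
    have hgu := gsel_spec u hple
    have hsupp : ∀ k ∈ Finset.Icc p.1 p.2, lam k ≠ 0 → u k = u (gsel u p) := by
      intro k hk hlk
      rw [Finset.mem_Icc] at hk
      -- w k = w (gsel w p), i.e. k is a w-argmax, so a u-argmax
      have hwk : w k = w (gsel w p) := by
        by_contra hne
        have hlt : w k < w (gsel w p) :=
          lt_of_le_of_ne (hgw.2.2 k hk.1 hk.2) hne
        -- then dot w (f p) < max, contradiction
        have hsum1 := hlamdot w
        rw [hterm p hp] at hsum1
        -- ∑ lam l * w l = w (gsel w p) with ∑ lam = 1 forces contradiction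
        have hub : ∀ l ∈ Finset.Icc p.1 p.2, lam l * w l ≤ lam l * w (gsel w p) := by
          intro l hl
          rw [Finset.mem_Icc] at hl
          exact mul_le_mul_of_nonneg_left (hgw.2.2 l hl.1 hl.2)
            (hlam0 l (Finset.mem_Icc.mpr hl))
        have hstrict : lam k * w k < lam k * w (gsel w p) := by
          apply mul_lt_mul_of_pos_left hlt
          exact lt_of_le_of_ne (hlam0 k (Finset.mem_Icc.mpr hk)) (Ne.symm hlk)
        have : ∑ l ∈ Finset.Icc p.1 p.2, lam l * w l <
            ∑ l ∈ Finset.Icc p.1 p.2, lam l * w (gsel w p) :=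
          Finset.sum_lt_sum hub ⟨k, Finset.mem_Icc.mpr hk, hstrict⟩
        rw [hsum1, ← Finset.sum_mul, hlam1, one_mul] at this
        exact lt_irrefl _ this
      have hagk : AG w p k := ⟨hk.1, hk.2, fun l h1 h2 => hwk ▸ hgw.2.2 l h1 h2⟩
      have hagu : AG u p k := hag p hp k hagk
      exact le_antisymm (hgu.2.2 k hk.1 hk.2) (hagu.2.2 _ hgu.1 hgu.2.1)
    rw [hlamdot u]
    calc ∑ k ∈ Finset.Icc p.1 p.2, lam k * u k
        = ∑ k ∈ Finset.Icc p.1 p.2, lam k * u (gsel u p) := by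
          apply Finset.sum_congr rfl
          intro k hk
          rcases eq_or_ne (lam k) 0 with h | h
          · rw [h, zero_mul, zero_mul]
          · rw [hsupp k hk h]
      _ = u (gsel u p) := by rw [← Finset.sum_mul, hlam1, one_mul]

end WithA
end Geom

end AssocAux


namespace AssocAux

section Bridge
variable {n : ℕ}

/-- restriction of `w` to `ℕ`. -/
noncomputable def vOf (n : ℕ) (w : Fin (n+1) → ℝ) : ℕ → ℝ :=
  fun k => if h : k ≤ n then w ⟨k, by omega⟩ else 0

lemma vOf_lt {w : Fin (n+1) → ℝ} {k : ℕ} (h : k ≤ n) :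
    vOf n w k = w ⟨k, by omega⟩ := dif_pos h

lemma ag_iff_amax {w : Fin (n+1) → ℝ} {p : Fin (n+1) × Fin (n+1)} {k : Fin (n+1)} :
    AG w p k ↔ Amax (vOf n w) p.1.val p.2.val k.val := by
  constructor
  · rintro ⟨h1, h2, h3⟩
    refine ⟨h1, h2, fun l hl1 hl2 => ?_⟩
    have hln : l ≤ n := le_trans hl2 (Nat.lt_succ_iff.mp p.2.isLt)
    rw [vOf_lt hln, vOf_lt (Nat.lt_succ_iff.mp k.isLt)]
    have := h3 ⟨l, by omega⟩ (by exact hl1) (by exact hl2)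
    simpa using this
  · rintro ⟨h1, h2, h3⟩
    refine ⟨h1, h2, fun l hl1 hl2 => ?_⟩
    have := h3 l.val hl1 hl2
    rw [vOf_lt (Nat.lt_succ_iff.mp l.isLt), vOf_lt (Nat.lt_succ_iff.mp k.isLt)] at this
    simpa using this

open Classical in
/-- the basin family of a functional. -/
noncomputable def Dw (n : ℕ) (w : Fin (n+1) → ℝ) : Finset (ℕ × ℕ) :=
  @Finset.filter _ (fun M => DmemN n (vOf n w) M) (Classical.decPred _)
    (Finset.range (n+1) ×ˢ Finset.range (n+1))

lemma mem_Dw {w : Fin (n+1) → ℝ} {M : ℕ × ℕ} :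
    M ∈ Dw n w ↔ DmemN n (vOf n w) M := by
  classical
  rw [Dw, Finset.mem_filter]
  constructor
  · exact fun h => h.2
  · intro h
    refine ⟨?_, h⟩
    obtain ⟨⟨h1, h2, -⟩, -, -⟩ := h
    rw [Finset.mem_product, Finset.mem_range, Finset.mem_range]
    omega

variable (a : Fin (n+1) × Fin (n+1) → ℝ)
variable (ha : ∀ p : Fin (n+1) × Fin (n+1), p.1 ≤ p.2 → 0 < a p)

include ha in
lemma key_tuple (w u : Fin (n+1) → ℝ) :
    maxFace (AssIII n a) w ⊆ maxFace (AssIII n a) u ↔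
      ∀ x y k : ℕ, y ≤ n → Amax (vOf n w) x y k → Amax (vOf n u) x y k := by
  rw [key a ha]
  constructor
  · intro h x y k hy hk
    have hk1 := hk.1
    have hk2 := hk.2.1
    set p : Fin (n+1) × Fin (n+1) := (⟨x, by omega⟩, ⟨y, by omega⟩) with hp
    have hpmem : p ∈ pairIdx n := mem_pairIdx.mpr (by simp [hp]; omega)
    have := h p hpmem ⟨k, by omega⟩ (ag_iff_amax.mpr hk)
    exact ag_iff_amax.mp this
  · intro h p hp k hk
    rw [ag_iff_amax] at hk ⊢
    exact h _ _ _ (Nat.lt_succ_iff.mp p.2.isLt) hk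

/-- L4: tuple containment is basin-family reverse containment. -/
lemma tuple_iff_Dw (w u : Fin (n+1) → ℝ) :
    (∀ x y k : ℕ, y ≤ n → Amax (vOf n w) x y k → Amax (vOf n u) x y k) ↔
      Dw n u ⊆ Dw n w := by
  constructor
  · intro h M hM
    rw [mem_Dw] at hM ⊢
    obtain ⟨⟨h12, h2n, hnp⟩, hLu, hRu⟩ := hM
    refine ⟨⟨h12, h2n, hnp⟩, ?_, ?_⟩
    · intro hpos k hk1 hk2
      have uniq : ∀ m, Amax (vOf n u) (M.1 - 1) M.2 m → m = M.1 - 1 := by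
        intro m hm
        by_contra hne
        have hge : M.1 ≤ m := by
          obtain ⟨hma, -, -⟩ := hm
          omega
        have h1 := hLu hpos m hge hm.2.1
        have h2 := hm.2.2 (M.1 - 1) le_rfl (by omega)
        linarith
      obtain ⟨kd, hkd⟩ := amax_exists (vOf n w) (show M.1 - 1 ≤ M.2 by omega)
      have hkdeq : kd = M.1 - 1 := uniq kd (h _ _ _ h2n hkd)
      have hle : ∀ l, M.1 - 1 ≤ l → l ≤ M.2 → vOf n w l ≤ vOf n w (M.1 - 1) := by
        intro l h1 h2
        have := hkd.2.2 l h1 h2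
        rwa [hkdeq] at this
      rcases lt_or_ge (vOf n w k) (vOf n w (M.1 - 1)) with hlt | hge
      · exact hlt
      · exfalso
        have heq : vOf n w k = vOf n w (M.1 - 1) :=
          le_antisymm (hle k (by omega) hk2) hge
        have hamax : Amax (vOf n w) (M.1 - 1) M.2 k :=
          ⟨by omega, hk2, fun l h1 h2 => heq ▸ hle l h1 h2⟩
        have := uniq k (h _ _ _ h2n hamax)
        omega
    · intro hpos k hk1 hk2
      have uniq : ∀ m, Amax (vOf n u) M.1 (M.2 + 1) m → m = M.2 + 1 := by
        intro m hm
        by_contra hne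
        have hge : m ≤ M.2 := by
          obtain ⟨-, hma, -⟩ := hm
          omega
        have h1 := hRu hpos m hm.1 hge
        have h2 := hm.2.2 (M.2 + 1) (by omega) le_rfl
        linarith
      obtain ⟨kd, hkd⟩ := amax_exists (vOf n w) (show M.1 ≤ M.2 + 1 by omega)
      have hkdeq : kd = M.2 + 1 := uniq kd (h _ _ _ (by omega) hkd)
      have hle : ∀ l, M.1 ≤ l → l ≤ M.2 + 1 → vOf n w l ≤ vOf n w (M.2 + 1) := by
        intro l h1 h2
        have := hkd.2.2 l h1 h2
        rwa [hkdeq] at this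
      rcases lt_or_ge (vOf n w k) (vOf n w (M.2 + 1)) with hlt | hge
      · exact hlt
      · exfalso
        have heq : vOf n w k = vOf n w (M.2 + 1) :=
          le_antisymm (hle k hk1 (by omega)) hge
        have hamax : Amax (vOf n w) M.1 (M.2 + 1) k :=
          ⟨hk1, by omega, fun l h1 h2 => heq ▸ hle l h1 h2⟩
        have := uniq k (h _ _ _ (by omega) hamax)
        omega
  · intro h x y k hy hk
    have hk1 := hk.1
    have hk2 := hk.2.1
    rw [amax_iff_dmem (n := n) (vOf n u) hy hk1 hk2]
    intro M hM hm1 hm2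
    have hMw : DmemN n (vOf n w) M := mem_Dw.mp (h (mem_Dw.mpr hM))
    exact (amax_iff_dmem (n := n) (vOf n w) hy hk1 hk2).mp hk M hMw hm1 hm2

include ha in
lemma face_subset_iff (w u : Fin (n+1) → ℝ) :
    maxFace (AssIII n a) w ⊆ maxFace (AssIII n a) u ↔ Dw n u ⊆ Dw n w :=
  (key_tuple a ha w u).trans (tuple_iff_Dw w u)

include ha in
lemma face_eq_iff (w u : Fin (n+1) → ℝ) :
    maxFace (AssIII n a) w = maxFace (AssIII n a) u ↔ Dw n u = Dw n w := by
  constructor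
  · intro h
    apply Finset.Subset.antisymm
    · exact (face_subset_iff a ha w u).mp h.subset
    · exact (face_subset_iff a ha u w).mp h.symm.subset
  · intro h
    apply Set.Subset.antisymm
    · exact (face_subset_iff a ha w u).mpr (by rw [h])
    · exact (face_subset_iff a ha u w).mpr (by rw [← h])

include ha in
lemma maxFace_nonempty (w : Fin (n+1) → ℝ) :
    (maxFace (AssIII n a) w).Nonempty := by
  have hg : ∀ p ∈ pairIdx n, AG w p (gsel w p) :=
    fun p hp => gsel_spec w (mem_pairIdx.mp hp)
  exact ⟨vpt a (gsel w), (mem_maxFace_iff a ha).mpr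
    ⟨vpt_mem a fun p hp => ⟨(hg p hp).1, (hg p hp).2.1⟩, dot_vpt_eq_bval a ha hg⟩⟩

lemma dmemN_congr {v v' : ℕ → ℝ} (h : ∀ k ≤ n, v k = v' k) {M : ℕ × ℕ} :
    DmemN n v M ↔ DmemN n v' M := by
  unfold DmemN
  constructor
  · rintro ⟨hp, hL, hR⟩
    have h1 := hp.1
    have h2 := hp.2.1
    refine ⟨hp, fun hpos k a b => ?_, fun hpos k a b => ?_⟩
    · rw [← h k (by omega), ← h (M.1 - 1) (by omega)]
      exact hL hpos k a b
    · rw [← h k (by omega), ← h (M.2 + 1) (by omega)]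
      exact hR hpos k a b
  · rintro ⟨hp, hL, hR⟩
    have h1 := hp.1
    have h2 := hp.2.1
    refine ⟨hp, fun hpos k a b => ?_, fun hpos k a b => ?_⟩
    · rw [h k (by omega), h (M.1 - 1) (by omega)]
      exact hL hpos k a b
    · rw [h k (by omega), h (M.2 + 1) (by omega)]
      exact hR hpos k a b

/-- the canonical functional of a noncrossing family. -/
noncomputable def wOf (n : ℕ) (F : Finset (ℕ × ℕ)) : Fin (n+1) → ℝ :=
  fun k => vF F k.val

lemma Dw_wOf {F : Finset (ℕ × ℕ)} (hF : ∀ M ∈ F, ProperI n M)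
    (hNC : ∀ M ∈ F, ∀ M' ∈ F, NoncrossI M M') : Dw n (wOf n F) = F := by
  ext M
  rw [mem_Dw, dmemN_congr (v' := vF F) (fun k hk => by rw [vOf_lt hk]; rfl)]
  exact ⟨fun h => dmem_vF_mem F hF hNC h, fun h => mem_dmem_vF F hF hNC h⟩

end Bridge

end AssocAux


namespace AssocAux

section Diag
variable {n : ℕ}

/-- the diagonal of the `(n+3)`-gon encoding a proper interval. -/
def dg (n : ℕ) (M : ℕ × ℕ) : Finset (Fin (n+3)) :=
  {⟨min M.1 n, by omega⟩, ⟨min (M.2+2) (n+2), by omega⟩}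

lemma dg_eq {M : ℕ × ℕ} (hM : ProperI n M) (h1 : M.1 < n+3) (h2 : M.2+2 < n+3) :
    dg n M = {⟨M.1, h1⟩, ⟨M.2+2, h2⟩} := by
  obtain ⟨ha', hb', -⟩ := hM
  ext x
  simp only [dg, Finset.mem_insert, Finset.mem_singleton, Fin.ext_iff]
  omega

lemma pair_eq {m : ℕ} {a b c d : Fin m} (hab : a < b) (hcd : c < d)
    (h : ({a, b} : Finset (Fin m)) = {c, d}) : a = c ∧ b = d := by
  have hab' : a.val < b.val := Fin.lt_def.mp hab
  have hcd' : c.val < d.val := Fin.lt_def.mp hcd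
  have hac : a = c ∨ a = d := by
    have : a ∈ ({c, d} : Finset (Fin m)) := by rw [← h]; simp
    simpa using this
  have hbc : b = c ∨ b = d := by
    have : b ∈ ({c, d} : Finset (Fin m)) := by rw [← h]; simp
    simpa using this
  have f1 : a.val = c.val ∨ a.val = d.val := hac.imp (congrArg Fin.val) (congrArg Fin.val)
  have f2 : b.val = c.val ∨ b.val = d.val := hbc.imp (congrArg Fin.val) (congrArg Fin.val)
  exact ⟨Fin.ext (by omega), Fin.ext (by omega)⟩

lemma isDiagonal_dg {M : ℕ × ℕ} (hM : ProperI n M) : IsDiagonal (n+3) (dg n M) := by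
  have h12 := hM.1
  have h2n := hM.2.1
  have hnp := hM.2.2
  refine ⟨⟨M.1, by omega⟩, ⟨M.2+2, by omega⟩, ?_, ?_, dg_eq hM (by omega) (by omega)⟩
  · simp only [ne_eq, Fin.ext_iff]
    omega
  · rintro (h | h)
    · have h' : (M.1 + 1) % (n+3) = M.2 + 2 := h
      rw [Nat.mod_eq_of_lt (show M.1 + 1 < n+3 by omega)] at h'
      omega
    · have h' : (M.2 + 2 + 1) % (n+3) = M.1 := h
      rcases eq_or_ne M.2 n with he | hne
      · rw [show M.2+2+1 = n+3 by omega, Nat.mod_self] at h'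
        omega
      · rw [Nat.mod_eq_of_lt (show M.2+2+1 < n+3 by omega)] at h'
        omega

/-- crossing of interval encodings. -/
def crossI (M M' : ℕ × ℕ) : Prop :=
  (M.1 < M'.1 ∧ M'.1 ≤ M.2 + 1 ∧ M.2 < M'.2) ∨
  (M'.1 < M.1 ∧ M.1 ≤ M'.2 + 1 ∧ M'.2 < M.2)

lemma noncross_not_cross {M M' : ℕ × ℕ} (h : NoncrossI M M') : ¬ crossI M M' := by
  unfold NoncrossI at h
  unfold crossI
  omega

lemma not_cross_noncross {M M' : ℕ × ℕ} (h : ¬ crossI M M') (h1 : M.1 ≤ M.2)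
    (h2 : M'.1 ≤ M'.2) : NoncrossI M M' := by
  unfold crossI at h
  unfold NoncrossI
  omega

lemma crosses_dg {M M' : ℕ × ℕ} (hM : ProperI n M) (hM' : ProperI n M') :
    Crosses (n+3) (dg n M) (dg n M') ↔ crossI M M' := by
  have hA1 := hM.1
  have hA2 := hM.2.1
  have hB1 := hM'.1
  have hB2 := hM'.2.1
  have e1 : dg n M = {⟨M.1, by omega⟩, ⟨M.2+2, by omega⟩} :=
    dg_eq hM (by omega) (by omega)
  have e1' : dg n M' = {⟨M'.1, by omega⟩, ⟨M'.2+2, by omega⟩} :=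
    dg_eq hM' (by omega) (by omega)
  have hlt1 : (⟨M.1, by omega⟩ : Fin (n+3)) < ⟨M.2+2, by omega⟩ := by
    rw [Fin.mk_lt_mk]
    omega
  have hlt1' : (⟨M'.1, by omega⟩ : Fin (n+3)) < ⟨M'.2+2, by omega⟩ := by
    rw [Fin.mk_lt_mk]
    omega
  constructor
  · rintro ⟨p, q, r, s, hpq, hqr, hrs, (⟨hd, he⟩ | ⟨hd, he⟩)⟩
    · rw [e1] at hd
      rw [e1'] at he
      obtain ⟨g1, g2⟩ := pair_eq hlt1 (lt_trans hpq hqr) hd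
      obtain ⟨g3, g4⟩ := pair_eq hlt1' (lt_trans hqr hrs) he
      have v1 : M.1 = p.val := congrArg Fin.val g1
      have v2 : M.2 + 2 = r.val := congrArg Fin.val g2
      have v3 : M'.1 = q.val := congrArg Fin.val g3
      have v4 : M'.2 + 2 = s.val := congrArg Fin.val g4
      have w1 := Fin.lt_def.mp hpq
      have w2 := Fin.lt_def.mp hqr
      have w3 := Fin.lt_def.mp hrs
      left
      omega
    · rw [e1] at hd
      rw [e1'] at he
      obtain ⟨g1, g2⟩ := pair_eq hlt1 (lt_trans hqr hrs) hd
      obtain ⟨g3, g4⟩ := pair_eq hlt1' (lt_trans hpq hqr) he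
      have v1 : M.1 = q.val := congrArg Fin.val g1
      have v2 : M.2 + 2 = s.val := congrArg Fin.val g2
      have v3 : M'.1 = p.val := congrArg Fin.val g3
      have v4 : M'.2 + 2 = r.val := congrArg Fin.val g4
      have w1 := Fin.lt_def.mp hpq
      have w2 := Fin.lt_def.mp hqr
      have w3 := Fin.lt_def.mp hrs
      right
      omega
  · rintro (⟨hc1, hc2, hc3⟩ | ⟨hc1, hc2, hc3⟩)
    · have hb := hM'.2.1
      refine ⟨⟨M.1, by omega⟩, ⟨M'.1, by omega⟩, ⟨M.2+2, by omega⟩, ⟨M'.2+2, by omega⟩,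
        ?_, ?_, ?_, Or.inl ⟨e1, e1'⟩⟩ <;> (rw [Fin.mk_lt_mk]; omega)
    · have hb := hM.2.1
      refine ⟨⟨M'.1, by omega⟩, ⟨M.1, by omega⟩, ⟨M'.2+2, by omega⟩, ⟨M.2+2, by omega⟩,
        ?_, ?_, ?_, Or.inr ⟨e1, e1'⟩⟩ <;> (rw [Fin.mk_lt_mk]; omega)

lemma dg_inj {M M' : ℕ × ℕ} (hM : ProperI n M) (hM' : ProperI n M')
    (h : dg n M = dg n M') : M = M' := by
  have hA1 := hM.1
  have hA2 := hM.2.1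
  have hB1 := hM'.1
  have hB2 := hM'.2.1
  have e1 : dg n M = ({⟨M.1, by omega⟩, ⟨M.2+2, by omega⟩} : Finset (Fin (n+3))) :=
    dg_eq hM (by omega) (by omega)
  have e1' : dg n M' = ({⟨M'.1, by omega⟩, ⟨M'.2+2, by omega⟩} : Finset (Fin (n+3))) :=
    dg_eq hM' (by omega) (by omega)
  rw [e1, e1'] at h
  have hlt1 : (⟨M.1, by omega⟩ : Fin (n+3)) < ⟨M.2+2, by omega⟩ := by
    rw [Fin.mk_lt_mk]
    omega
  have hlt1' : (⟨M'.1, by omega⟩ : Fin (n+3)) < ⟨M'.2+2, by omega⟩ := by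
    rw [Fin.mk_lt_mk]
    omega
  obtain ⟨g1, g2⟩ := pair_eq hlt1 hlt1' h
  have v1 : M.1 = M'.1 := congrArg Fin.val g1
  have v2 : M.2 + 2 = M'.2 + 2 := congrArg Fin.val g2
  exact Prod.ext_iff.mpr ⟨by omega, by omega⟩

/-- decoding a diagonal into a proper interval. -/
noncomputable def undg (n : ℕ) (d : Finset (Fin (n+3))) : ℕ × ℕ :=
  if h : d.Nonempty then ((d.min' h).val, (d.max' h).val - 2) else (0, 0)

lemma pair_minmax {m : ℕ} {x y : Fin m} (h : x < y)
    (hne : ({x, y} : Finset (Fin m)).Nonempty) :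
    (({x, y} : Finset (Fin m)).min' hne = x) ∧
    (({x, y} : Finset (Fin m)).max' hne = y) := by
  constructor
  · apply le_antisymm
    · exact Finset.min'_le _ x (by simp)
    · apply Finset.le_min'
      intro z hz
      rcases Finset.mem_insert.mp hz with rfl | hz
      · exact le_rfl
      · rw [Finset.mem_singleton] at hz
        subst hz
        exact h.le
  · apply le_antisymm
    · apply Finset.max'_le
      intro z hz
      rcases Finset.mem_insert.mp hz with rfl | hz
      · exact h.le
      · rw [Finset.mem_singleton] at hz
        subst hz
        exact le_rfl
    · exact Finset.le_max' _ y (by simp)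

lemma undg_spec_sorted {x y : Fin (n+3)} (hxy : x < y) (hnadj : ¬ adjacent (n+3) x y) :
    ProperI n (undg n ({x, y} : Finset (Fin (n+3)))) ∧
      dg n (undg n ({x, y} : Finset (Fin (n+3)))) = {x, y} := by
  have hne : ({x, y} : Finset (Fin (n+3))).Nonempty := ⟨x, by simp⟩
  obtain ⟨hmin, hmax⟩ := pair_minmax hxy hne
  have hu : undg n ({x, y} : Finset (Fin (n+3))) = (x.val, y.val - 2) := by
    rw [undg, dif_pos hne]
    rw [hmin, hmax]
  have hxy' : x.val < y.val := Fin.lt_def.mp hxy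
  have hyb : y.val < n + 3 := y.isLt
  -- nonadjacency facts
  have h1 : x.val + 1 ≠ y.val := by
    intro hcon
    exact hnadj (Or.inl (by rw [Nat.mod_eq_of_lt (by omega)]; exact hcon))
  have h2 : ¬(x.val = 0 ∧ y.val = n + 2) := by
    rintro ⟨ha', hb'⟩
    exact hnadj (Or.inr (by rw [show y.val + 1 = n+3 by omega, Nat.mod_self]; omega))
  have hprop : ProperI n (x.val, y.val - 2) := ⟨by omega, by omega, by omega⟩
  refine ⟨hu ▸ hprop, ?_⟩
  rw [hu, dg_eq hprop (by omega) (by omega)]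
  have ex : (⟨(x.val, y.val - 2).1, by omega⟩ : Fin (n+3)) = x := Fin.ext rfl
  have ey : (⟨(x.val, y.val - 2).2 + 2, by omega⟩ : Fin (n+3)) = y := Fin.ext (by simp; omega)
  rw [ex, ey]

lemma adjacent_symm {m : ℕ} {x y : Fin m} (h : adjacent m x y) : adjacent m y x :=
  h.symm

lemma undg_spec {d : Finset (Fin (n+3))} (hd : IsDiagonal (n+3) d) :
    ProperI n (undg n d) ∧ dg n (undg n d) = d := by
  obtain ⟨x, y, hne, hnadj, rfl⟩ := hd
  rcases lt_trichotomy x y with h | h | h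
  · exact undg_spec_sorted h hnadj
  · exact absurd h hne
  · rw [Finset.pair_comm]
    exact undg_spec_sorted h (fun hadj => hnadj (adjacent_symm hadj))

end Diag

end AssocAux


namespace AssocAux

lemma image_dg_subset {n : ℕ} {s t : Finset (ℕ × ℕ)} (hs : ∀ M ∈ s, ProperI n M)
    (ht : ∀ M ∈ t, ProperI n M) :
    s.image (dg n) ⊆ t.image (dg n) ↔ s ⊆ t := by
  constructor
  · intro h M hM
    have : dg n M ∈ t.image (dg n) := h (Finset.mem_image_of_mem _ hM)
    obtain ⟨M', hM', he⟩ := Finset.mem_image.mp this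
    have := dg_inj (ht M' hM') (hs M hM) he
    rwa [this] at hM'
  · exact fun h => Finset.image_subset_image h

end AssocAux


namespace AssocAux

theorem main_correspondence (n : ℕ) (a : Fin (n+1) × Fin (n+1) → ℝ)
    (ha : ∀ p : Fin (n+1) × Fin (n+1), p.1 ≤ p.2 → 0 < a p) :
    ∃ φ : {F : Set (Fin (n+1) → ℝ) // IsFaceOf (AssIII n a) F ∧ F.Nonempty} →
        {D : Finset (Finset (Fin (n+3))) // (∀ d ∈ D, IsDiagonal (n+3) d) ∧
          (∀ d ∈ D, ∀ e ∈ D, ¬ Crosses (n+3) d e)},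
      Function.Bijective φ ∧
      (∀ F G : {F : Set (Fin (n+1) → ℝ) // IsFaceOf (AssIII n a) F ∧ F.Nonempty},
        (F.1 ⊆ G.1 ↔ (φ G).1 ⊆ (φ F).1)) := by
  classical
  choose wsel hwsel using
    (fun F : {F : Set (Fin (n+1) → ℝ) // IsFaceOf (AssIII n a) F ∧ F.Nonempty} => F.2.1)
  have hDprops : ∀ w : Fin (n+1) → ℝ,
      (∀ d ∈ (Dw n w).image (dg n), IsDiagonal (n+3) d) ∧
      (∀ d ∈ (Dw n w).image (dg n), ∀ e ∈ (Dw n w).image (dg n),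
        ¬ Crosses (n+3) d e) := by
    intro w
    constructor
    · intro d hd
      obtain ⟨M, hM, rfl⟩ := Finset.mem_image.mp hd
      exact isDiagonal_dg (mem_Dw.mp hM).1
    · intro d hd e he
      obtain ⟨M, hM, rfl⟩ := Finset.mem_image.mp hd
      obtain ⟨M', hM', rfl⟩ := Finset.mem_image.mp he
      rw [crosses_dg (mem_Dw.mp hM).1 (mem_Dw.mp hM').1]
      exact noncross_not_cross (dmem_noncross (mem_Dw.mp hM) (mem_Dw.mp hM'))
  have hDwProper : ∀ (w : Fin (n+1) → ℝ), ∀ M ∈ Dw n w, ProperI n M :=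
    fun w M hM => (mem_Dw.mp hM).1
  refine ⟨fun F => ⟨(Dw n (wsel F)).image (dg n),
      (hDprops (wsel F)).1, (hDprops (wsel F)).2⟩, ⟨?_, ?_⟩, ?_⟩
  · -- injective
    intro F G h
    have himg : (Dw n (wsel F)).image (dg n) = (Dw n (wsel G)).image (dg n) :=
      congrArg Subtype.val h
    have hDD : Dw n (wsel F) = Dw n (wsel G) := by
      apply Finset.Subset.antisymm
      · apply (image_dg_subset (hDwProper (wsel F)) (hDwProper (wsel G))).mp
        rw [himg]
      · apply (image_dg_subset (hDwProper (wsel G)) (hDwProper (wsel F))).mp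
        rw [himg]
    apply Subtype.ext
    rw [hwsel F, hwsel G]
    exact (face_eq_iff a ha (wsel F) (wsel G)).mpr hDD.symm
  · -- surjective
    rintro ⟨D, hdiag, hnc⟩
    set Fam : Finset (ℕ × ℕ) := D.image (undg n) with hFam
    have hFam1 : ∀ M ∈ Fam, ProperI n M := by
      intro M hM
      obtain ⟨d, hd, rfl⟩ := Finset.mem_image.mp hM
      exact (undg_spec (hdiag d hd)).1
    have hFam2 : ∀ M ∈ Fam, ∀ M' ∈ Fam, NoncrossI M M' := by
      intro M hM M' hM'
      obtain ⟨d, hd, rfl⟩ := Finset.mem_image.mp hM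
      obtain ⟨e, he', rfl⟩ := Finset.mem_image.mp hM'
      apply not_cross_noncross ?_ (undg_spec (hdiag d hd)).1.1 (undg_spec (hdiag e he')).1.1
      intro hcr
      apply hnc d hd e he'
      have := (crosses_dg (undg_spec (hdiag d hd)).1 (undg_spec (hdiag e he')).1).mpr hcr
      rwa [(undg_spec (hdiag d hd)).2, (undg_spec (hdiag e he')).2] at this
    set w0 : Fin (n+1) → ℝ := wOf n Fam with hw0
    set Fface : {F : Set (Fin (n+1) → ℝ) // IsFaceOf (AssIII n a) F ∧ F.Nonempty} :=
      ⟨maxFace (AssIII n a) w0, ⟨w0, rfl⟩, maxFace_nonempty a ha w0⟩ with hFface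
    refine ⟨Fface, ?_⟩
    apply Subtype.ext
    show (Dw n (wsel Fface)).image (dg n) = D
    have h1 : maxFace (AssIII n a) (wsel Fface) = maxFace (AssIII n a) w0 :=
      (hwsel Fface).symm
    have h2 : Dw n w0 = Dw n (wsel Fface) :=
      (face_eq_iff a ha (wsel Fface) w0).mp h1
    rw [← h2, hw0, Dw_wOf hFam1 hFam2, hFam, Finset.image_image]
    calc D.image (dg n ∘ undg n) = D.image id :=
          Finset.image_congr (fun d hd => (undg_spec (hdiag d hd)).2)
      _ = D := Finset.image_id
  · -- order reversing
    intro F G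
    constructor
    · intro hFG
      have hsub : maxFace (AssIII n a) (wsel F) ⊆ maxFace (AssIII n a) (wsel G) := by
        rw [← hwsel F, ← hwsel G]
        exact hFG
      have hDD : Dw n (wsel G) ⊆ Dw n (wsel F) :=
        (face_subset_iff a ha (wsel F) (wsel G)).mp hsub
      exact Finset.image_subset_image hDD
    · intro h
      have hDD : Dw n (wsel G) ⊆ Dw n (wsel F) :=
        (image_dg_subset (hDwProper (wsel G)) (hDwProper (wsel F))).mp h
      rw [hwsel F, hwsel G]
      exact (face_subset_iff a ha (wsel F) (wsel G)).mpr hDD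

end AssocAux

/-- There is an (order-reversing) bijection `φ` from the
nonempty faces of `Ass_n^{III}(a)` onto the sets of pairwise non-crossing
diagonals of the `(n+3)`-gon: `F ⊆ G ↔ φ G ⊆ φ F`. In particular the vertices
correspond to triangulations and `Ass_n^{III}(a)` is an `n`-dimensional
associahedron. -/
theorem assIII_face_correspondence (n : ℕ) (hn : 1 ≤ n)
    (a : Fin (n+1) × Fin (n+1) → ℝ)
    (ha : ∀ p : Fin (n+1) × Fin (n+1), p.1 ≤ p.2 → 0 < a p) :
    ∃ φ : {F : Set (Fin (n+1) → ℝ) // IsFaceOf (AssIII n a) F ∧ F.Nonempty} →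
        {D : Finset (Finset (Fin (n+3))) // (∀ d ∈ D, IsDiagonal (n+3) d) ∧
          (∀ d ∈ D, ∀ e ∈ D, ¬ Crosses (n+3) d e)},
      Function.Bijective φ ∧
      (∀ F G : {F : Set (Fin (n+1) → ℝ) // IsFaceOf (AssIII n a) F ∧ F.Nonempty},
        (F.1 ⊆ G.1 ↔ (φ G).1 ⊆ (φ F).1)) := by
  classical
  open AssocAux in
  exact main_correspondence n a ha
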